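/- Let λ > 0 and let S : ℝ → ℝ be a twice continuously differentiable function satisfying S''(ξ) − S(ξ) + λ·S(ξ)³ = 0 for all ξ, with S(ξ) → 0 as ξ → +∞ and as ξ → −∞, and S not identically zero. Then there exist c ∈ ℝ and σ ∈ {−1, +1} such that S(ξ) = σ·√(2/λ)/cosh(ξ − c) for all ξ ∈ ℝ. In particular, if S is moreover even, then c = 0, so the only two nontrivial even decaying solutions are ±√(2/λ)/cosh(ξ). -/

import Mathlib

open Real Set Filter


/-- Lipschitz bound for the vector field of the first-order system. -/
lemma soliton_lipschitz (lam R : ℝ) (hlam : 0 < lam) (hR : 0 ≤ R) :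
    LipschitzOnWith (⟨1 + 3 * lam * R ^ 2, by positivity⟩ : NNReal)
      (fun p : ℝ × ℝ => (p.2, p.1 - lam * p.1 ^ 3)) (Metric.closedBall 0 R) := by
  refine LipschitzOnWith.of_dist_le_mul ?_
  intro p hp q hq
  simp only [Metric.mem_closedBall, dist_zero_right, Prod.norm_def] at hp hq
  have hp1 : |p.1| ≤ R := le_trans (le_max_left _ _) hp
  have hq1 : |q.1| ≤ R := le_trans (le_max_left _ _) hq
  rw [Prod.dist_eq, Prod.dist_eq]
  simp only [Real.dist_eq]
  rw [max_le_iff]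
  constructor
  · calc |p.2 - q.2| ≤ max |p.1 - q.1| |p.2 - q.2| := le_max_right _ _
    _ ≤ (1 + 3 * lam * R ^ 2) * max |p.1 - q.1| |p.2 - q.2| := by
        apply le_mul_of_one_le_left (le_max_of_le_left (abs_nonneg _)) (by nlinarith)
  · have key : |p.1 - lam * p.1 ^ 3 - (q.1 - lam * q.1 ^ 3)| ≤ (1 + 3 * lam * R ^ 2) * |p.1 - q.1| := by
      have h1 : p.1 - lam * p.1 ^ 3 - (q.1 - lam * q.1 ^ 3)
          = (p.1 - q.1) * (1 - lam * (p.1^2 + p.1*q.1 + q.1^2)) := by ring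
      rw [h1, abs_mul]
      have h2 : |1 - lam * (p.1^2 + p.1*q.1 + q.1^2)| ≤ 1 + 3 * lam * R ^ 2 := by
        rw [abs_le]
        have hp2 : p.1 ^ 2 ≤ R ^ 2 := by nlinarith [sq_abs p.1, abs_nonneg p.1]
        have hq2 : q.1 ^ 2 ≤ R ^ 2 := by nlinarith [sq_abs q.1, abs_nonneg q.1]
        have hpqa : |p.1 * q.1| ≤ R ^ 2 := by
          rw [abs_mul]; nlinarith [abs_nonneg p.1, abs_nonneg q.1]
        have hpq1 : p.1 * q.1 ≤ R ^ 2 := le_trans (le_abs_self _) hpqa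
        have hpq2 : -(R ^ 2) ≤ p.1 * q.1 := by
          have := neg_abs_le (p.1 * q.1); linarith
        constructor
        · nlinarith
        · nlinarith
      exact mul_le_mul_of_nonneg_left h2 (abs_nonneg _) |>.trans_eq (mul_comm _ _)
    calc |p.1 - lam * p.1 ^ 3 - (q.1 - lam * q.1 ^ 3)| ≤ (1 + 3 * lam * R ^ 2) * |p.1 - q.1| := key
    _ ≤ (1 + 3 * lam * R ^ 2) * max |p.1 - q.1| |p.2 - q.2| := by
        apply mul_le_mul_of_nonneg_left (le_max_left _ _) (by positivity)

/-- Uniqueness for the second-order ODE `f'' = f - lam f³` among solutions staying in `[-R,R]`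
(together with their derivatives). -/
lemma soliton_ode_unique (lam R : ℝ) (hlam : 0 < lam) (hR : 0 ≤ R)
    (f f' g g' : ℝ → ℝ)
    (hf : ∀ t, HasDerivAt f (f' t) t) (hf' : ∀ t, HasDerivAt f' (f t - lam * f t ^ 3) t)
    (hfb : ∀ t, |f t| ≤ R) (hfb' : ∀ t, |f' t| ≤ R)
    (hg : ∀ t, HasDerivAt g (g' t) t) (hg' : ∀ t, HasDerivAt g' (g t - lam * g t ^ 3) t)
    (hgb : ∀ t, |g t| ≤ R) (hgb' : ∀ t, |g' t| ≤ R)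
    (t₀ : ℝ) (h0 : f t₀ = g t₀) (h0' : f' t₀ = g' t₀) :
    ∀ t, f t = g t := by
  intro t
  set V : ℝ × ℝ → ℝ × ℝ := fun p => (p.2, p.1 - lam * p.1 ^ 3) with hV
  set F : ℝ → ℝ × ℝ := fun t => (f t, f' t) with hF
  set G : ℝ → ℝ × ℝ := fun t => (g t, g' t) with hG
  have hFd : ∀ s, HasDerivAt F (V (F s)) s := fun s => (hf s).prodMk (hf' s)
  have hGd : ∀ s, HasDerivAt G (V (G s)) s := fun s => (hg s).prodMk (hg' s)
  have hFb : ∀ s, F s ∈ Metric.closedBall (0 : ℝ × ℝ) R := by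
    intro s
    simp only [Metric.mem_closedBall, dist_zero_right, Prod.norm_def, hF, Real.norm_eq_abs]
    exact max_le (hfb s) (hfb' s)
  have hGb : ∀ s, G s ∈ Metric.closedBall (0 : ℝ × ℝ) R := by
    intro s
    simp only [Metric.mem_closedBall, dist_zero_right, Prod.norm_def, hG, Real.norm_eq_abs]
    exact max_le (hgb s) (hgb' s)
  have key : EqOn F G (Icc (min t t₀ - 1) (max t t₀ + 1)) := by
    apply ODE_solution_unique_of_mem_Icc
      (v := fun _ : ℝ => V) (s := fun _ : ℝ => Metric.closedBall (0 : ℝ × ℝ) R)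
      (fun _ _ => soliton_lipschitz lam R hlam hR)
      (t₀ := t₀)
    · constructor
      · have : min t t₀ - 1 < t₀ := lt_of_le_of_lt (by simp [min_le_right]) (by linarith : t₀ - 1 < t₀)
        linarith [min_le_right t t₀]
      · linarith [le_max_right t t₀]
    · exact fun s _ => (hFd s).continuousAt.continuousWithinAt
    · exact fun s _ => hFd s
    · exact fun s _ => hFb s
    · exact fun s _ => (hGd s).continuousAt.continuousWithinAt
    · exact fun s _ => hGd s
    · exact fun s _ => hGb s
    · simp [hF, hG, h0, h0']
  have ht : t ∈ Icc (min t t₀ - 1) (max t t₀ + 1) :=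
    ⟨by linarith [min_le_left t t₀], by linarith [le_max_left t t₀]⟩
  exact congrArg Prod.fst (key ht)

lemma cosh_hasDerivAt (c ξ : ℝ) : HasDerivAt (fun x => Real.cosh (x - c)) (Real.sinh (ξ - c)) ξ := by
  exact ((Real.hasDerivAt_cosh (ξ - c)).comp ξ ((hasDerivAt_id ξ).sub_const c)).congr_deriv (mul_one _)

lemma sinh_hasDerivAt (c ξ : ℝ) : HasDerivAt (fun x => Real.sinh (x - c)) (Real.cosh (ξ - c)) ξ := by
  exact ((Real.hasDerivAt_sinh (ξ - c)).comp ξ ((hasDerivAt_id ξ).sub_const c)).congr_deriv (mul_one _)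

lemma sech_d1 (m c ξ : ℝ) :
    HasDerivAt (fun x => m / Real.cosh (x - c))
      (-(m * Real.sinh (ξ - c)) / Real.cosh (ξ - c) ^ 2) ξ := by
  have h := ((hasDerivAt_const ξ m).div (cosh_hasDerivAt c ξ) (Real.cosh_pos _).ne')
  exact h.congr_deriv (by ring)

lemma sech_d2 (lam m c ξ : ℝ) (hm : lam * m ^ 2 = 2) :
    HasDerivAt (fun x => -(m * Real.sinh (x - c)) / Real.cosh (x - c) ^ 2)
      (m / Real.cosh (ξ - c) - lam * (m / Real.cosh (ξ - c)) ^ 3) ξ := by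
  have hc := Real.cosh_pos (ξ - c)
  have hu : HasDerivAt (fun x => -(m * Real.sinh (x - c))) (-(m * Real.cosh (ξ - c))) ξ :=
    (((sinh_hasDerivAt c ξ)).const_mul m).neg
  have hv : HasDerivAt (fun x => Real.cosh (x - c) ^ 2)
      (2 * Real.cosh (ξ - c) * Real.sinh (ξ - c)) ξ := by
    exact ((cosh_hasDerivAt c ξ).pow 2).congr_deriv (by norm_num)
  have h := hu.div hv (by positivity)
  refine h.congr_deriv (Eq.symm ?_)
  have hs : Real.sinh (ξ - c) ^ 2 = Real.cosh (ξ - c) ^ 2 - 1 := Real.sinh_sq _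
  field_simp
  linear_combination (-m) * hm + (-(2 * m)) * hs

lemma sech_bound (m c ξ : ℝ) (hm : 0 ≤ m) : |m / Real.cosh (ξ - c)| ≤ m := by
  have hc := Real.cosh_pos (ξ - c)
  have h1 := Real.one_le_cosh (ξ - c)
  rw [abs_div, abs_of_nonneg hm, abs_of_pos hc]
  rw [div_le_iff₀ hc]
  nlinarith

lemma sech_d_bound (m c ξ : ℝ) (hm : 0 ≤ m) :
    |-(m * Real.sinh (ξ - c)) / Real.cosh (ξ - c) ^ 2| ≤ m := by
  have hc := Real.cosh_pos (ξ - c)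
  have h1 := Real.one_le_cosh (ξ - c)
  have hs : |Real.sinh (ξ - c)| ≤ Real.cosh (ξ - c) := by
    have := Real.sinh_sq (ξ - c)
    nlinarith [sq_abs (Real.sinh (ξ - c)), abs_nonneg (Real.sinh (ξ - c))]
  rw [abs_div, abs_neg, abs_mul, abs_of_nonneg hm, abs_pow, abs_of_pos hc]
  rw [div_le_iff₀ (by positivity)]
  nlinarith [mul_le_mul_of_nonneg_left hs hm, mul_le_mul_of_nonneg_left h1 (mul_nonneg hm hc.le)]

/-- The hyperbolic even-center lemma. -/
lemma even_center (lam c σ : ℝ) (hlam : 0 < lam) (hσ : σ = 1 ∨ σ = -1)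
    (S : ℝ → ℝ) (hrepr : ∀ ξ, S ξ = σ * (Real.sqrt (2 / lam) / Real.cosh (ξ - c)))
    (heven : ∀ ξ, S (-ξ) = S ξ) : c = 0 := by
  have hm : 0 < Real.sqrt (2 / lam) := Real.sqrt_pos.mpr (by positivity)
  have hσ0 : σ ≠ 0 := by rcases hσ with h | h <;> simp [h]
  have h1 := heven 1
  rw [hrepr, hrepr] at h1
  have h2 := mul_left_cancel₀ hσ0 h1
  have h3 := (div_eq_div_iff (Real.cosh_pos _).ne' (Real.cosh_pos _).ne').mp h2
  have h4 := mul_left_cancel₀ hm.ne' h3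
  rw [show (-1 - c : ℝ) = -(1 + c) by ring, Real.cosh_neg, Real.cosh_add, Real.cosh_sub] at h4
  have hs1 : 0 < Real.sinh 1 := Real.sinh_pos_iff.mpr one_pos
  have hsc : Real.sinh c = 0 := by nlinarith
  have := Real.sinh_eq_zero.mp hsc
  exact this

/-- Main auxiliary: a positive solution with the energy identity equals the sech profile. -/
lemma soliton_positive (lam : ℝ) (hlam : 0 < lam) (u u' : ℝ → ℝ)
    (hu : ∀ t, HasDerivAt u (u' t) t)
    (hu' : ∀ t, HasDerivAt u' (u t - lam * u t ^ 3) t)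
    (hub : ∀ t, |u t| ≤ Real.sqrt (2 / lam)) (hub' : ∀ t, |u' t| ≤ Real.sqrt (2 / lam))
    (hen : ∀ t, u' t ^ 2 = u t ^ 2 * (1 - lam / 2 * u t ^ 2))
    (hupos : ∀ t, 0 < u t)
    (htop : Tendsto u atTop (nhds 0)) (hbot : Tendsto u atBot (nhds 0)) :
    ∃ c, ∀ ξ, u ξ = Real.sqrt (2 / lam) / Real.cosh (ξ - c) := by
  set m := Real.sqrt (2 / lam) with hm
  have hm2 : m ^ 2 = 2 / lam := Real.sq_sqrt (by positivity)
  have hmpos : 0 < m := Real.sqrt_pos.mpr (by positivity)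
  have hlm : lam * m ^ 2 = 2 := by rw [hm2]; field_simp
  obtain ⟨A₁, hA₁⟩ := eventually_atTop.mp (htop.eventually_lt_const (hupos 0))
  obtain ⟨A₂, hA₂⟩ := eventually_atBot.mp (hbot.eventually_lt_const (hupos 0))
  set a := min A₂ 0 with ha
  set b := max A₁ 0 with hb
  have h0ab : (0:ℝ) ∈ Icc a b := ⟨min_le_right _ _, le_max_right _ _⟩
  obtain ⟨c, hcmem, hcmax⟩ := isCompact_Icc.exists_isMaxOn ⟨0, h0ab⟩
    (fun t _ => (hu t).continuousAt.continuousWithinAt)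
  have hglob : ∀ t, u t ≤ u c := by
    intro t
    by_cases ht : t ∈ Icc a b
    · exact hcmax ht
    · have h0c : u 0 ≤ u c := hcmax h0ab
      rw [mem_Icc, not_and_or, not_le, not_le] at ht
      rcases ht with ht | ht
      · have : u t < u 0 := hA₂ t (le_trans ht.le (min_le_left _ _))
        linarith
      · have : u t < u 0 := hA₁ t (le_of_lt (lt_of_le_of_lt (le_max_left _ _) ht))
        linarith
  have hloc : IsLocalMax u c := Filter.Eventually.of_forall hglob
  have hd0 : u' c = 0 := by
    have h1 := hloc.deriv_eq_zero
    rw [(hu c).deriv] at h1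
    exact h1
  have hval : u c = m := by
    have h1 := hen c
    rw [hd0] at h1
    have h3 := hupos c
    have h4 : 1 - lam / 2 * u c ^ 2 = 0 := by
      have h1' : u c ^ 2 * (1 - lam / 2 * u c ^ 2) = 0 := by linarith [h1]
      rcases mul_eq_zero.mp h1' with h | h
      · exact absurd h (by positivity)
      · exact h
    have h2 : u c ^ 2 = 2 / lam := by
      rw [eq_div_iff hlam.ne']
      nlinarith
    rw [hm, ← h2, Real.sqrt_sq (hupos c).le]
  refine ⟨c, ?_⟩
  exact soliton_ode_unique lam m hlam hmpos.le u u'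
    (fun x => m / Real.cosh (x - c)) (fun x => -(m * Real.sinh (x - c)) / Real.cosh (x - c) ^ 2)
    hu hu' hub hub'
    (fun t => sech_d1 m c t) (fun t => sech_d2 lam m c t hlm)
    (fun t => sech_bound m c t hmpos.le) (fun t => sech_d_bound m c t hmpos.le)
    c (by simp [hval]) (by simp [hd0])

theorem soliton_profile_unique (lam : ℝ) (hlam : 0 < lam) (S : ℝ → ℝ)
    (hreg : ContDiff ℝ 2 S)
    (hode : ∀ ξ, deriv (deriv S) ξ - S ξ + lam * S ξ ^ 3 = 0)
    (htop : Filter.Tendsto S Filter.atTop (nhds 0))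
    (hbot : Filter.Tendsto S Filter.atBot (nhds 0))
    (hne : ∃ ξ, S ξ ≠ 0) :
    ∃ c σ : ℝ, (σ = 1 ∨ σ = -1) ∧
      (∀ ξ, S ξ = σ * (Real.sqrt (2 / lam) / Real.cosh (ξ - c))) ∧
      ((∀ ξ, S (-ξ) = S ξ) → c = 0) := by
  have hreg' : ContDiff ℝ ((1:ℕ)+1) S := by exact_mod_cast hreg
  rw [contDiff_succ_iff_deriv] at hreg'
  have hSd : ∀ t, HasDerivAt S (deriv S t) t := fun t => (hreg'.1 t).hasDerivAt
  have hS'd : ∀ t, HasDerivAt (deriv S) (S t - lam * S t ^ 3) t := by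
    intro t
    have h1 : HasDerivAt (deriv S) (deriv (deriv S) t) t :=
      ((hreg'.2.2.differentiable (by simp)) t).hasDerivAt
    have h2 : deriv (deriv S) t = S t - lam * S t ^ 3 := by linarith [hode t]
    rwa [h2] at h1
  set E : ℝ → ℝ := fun t => (deriv S t) ^ 2 - (S t) ^ 2 + lam / 2 * (S t) ^ 4 with hE
  have hEd : ∀ t, HasDerivAt E 0 t := by
    intro t
    have h1 := ((hS'd t).pow 2).sub ((hSd t).pow 2)
    have h2 := ((hSd t).pow 4).const_mul (lam / 2)
    have h3 := h1.add h2
    refine h3.congr_deriv ?_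
    push_cast
    ring
  have hEconst : ∀ t, E t = E 0 :=
    fun t => is_const_of_deriv_eq_zero (fun x => (hEd x).differentiableAt)
      (fun x => (hEd x).deriv) t 0
  set E0 := E 0 with hE0
  have hlim : Tendsto (fun t => (deriv S t) ^ 2) atTop (nhds E0) := by
    have heq : ∀ t, (deriv S t) ^ 2 = E0 + (S t) ^ 2 - lam / 2 * (S t) ^ 4 := by
      intro t; have := hEconst t; simp only [hE] at this ⊢; linarith
    have h1 : Tendsto (fun t => E0 + (S t) ^ 2 - lam / 2 * (S t) ^ 4) atTop
        (nhds (E0 + 0 ^ 2 - lam / 2 * 0 ^ 4)) :=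
      ((tendsto_const_nhds.add (htop.pow 2)).sub ((htop.pow 4).const_mul (lam / 2)))
    simp only [ne_eq, OfNat.ofNat_ne_zero, not_false_eq_true, zero_pow, add_zero, mul_zero,
      sub_zero] at h1
    exact h1.congr (fun t => (heq t).symm)
  have hE0nn : 0 ≤ E0 := ge_of_tendsto hlim (Eventually.of_forall fun t => sq_nonneg _)
  have hE0z : E0 = 0 := by
    by_contra hne0
    have hE0pos : 0 < E0 := lt_of_le_of_ne hE0nn (Ne.symm hne0)
    have h1 : ∀ᶠ t in atTop, E0 / 2 < (deriv S t) ^ 2 :=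
      hlim.eventually_const_lt (half_lt_self hE0pos)
    have h2 : ∀ᶠ t in atTop, S t ∈ Ioo (-1:ℝ) 1 :=
      htop.eventually (Ioo_mem_nhds (by norm_num) (by norm_num))
    obtain ⟨M, hM⟩ := eventually_atTop.mp (h1.and h2)
    set w := max 1 (8 / E0) with hw
    have hw1 : (1:ℝ) ≤ w := le_max_left _ _
    have hw8 : 8 / E0 ≤ w := le_max_right _ _
    have hwpos : (0:ℝ) < w := by linarith
    have hMx : M < M + w := by linarith
    obtain ⟨ζ, hζmem, hζ⟩ := exists_deriv_eq_slope S hMx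
      (fun t _ => (hSd t).continuousAt.continuousWithinAt)
      (fun t _ => (hSd t).differentiableAt.differentiableWithinAt)
    have hζM : M ≤ ζ := hζmem.1.le
    have hd : E0 / 2 < (deriv S ζ) ^ 2 := (hM ζ hζM).1
    obtain ⟨hSM1, hSM2⟩ := (hM M le_rfl).2
    obtain ⟨hSx1, hSx2⟩ := (hM (M + w) (by linarith)).2
    rw [hζ, show M + w - M = w by ring] at hd
    rw [div_pow, lt_div_iff₀ (by positivity)] at hd
    have hnum : (S (M + w) - S M) ^ 2 < 4 := by nlinarith
    have hww : w ≤ w ^ 2 := by nlinarith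
    have h8 : 8 ≤ E0 * w := by rw [div_le_iff₀ hE0pos] at hw8; linarith
    have h9 : E0 * w ≤ E0 * w ^ 2 := mul_le_mul_of_nonneg_left hww hE0pos.le
    clear_value w E0
    linarith [hd, hnum, h8, h9]
  have hen : ∀ t, (deriv S t) ^ 2 = (S t) ^ 2 * (1 - lam / 2 * (S t) ^ 2) := by
    intro t
    have h := hEconst t
    rw [hE0z] at h
    simp only [hE] at h
    nlinarith [h]
  have hSb : ∀ t, (S t) ^ 2 ≤ 2 / lam := by
    intro t
    rw [le_div_iff₀ hlam]
    nlinarith [hen t, sq_nonneg (deriv S t), sq_nonneg (S t)]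
  have hS'b : ∀ t, (deriv S t) ^ 2 ≤ 2 / lam := by
    intro t
    have h1 := hen t
    have h2 := hSb t
    nlinarith [sq_nonneg (S t), mul_nonneg (sq_nonneg (S t)) (sq_nonneg (S t)), hlam.le]
  set R := Real.sqrt (2 / lam) with hRdef
  have habsS : ∀ t, |S t| ≤ R := by
    intro t; rw [← Real.sqrt_sq_eq_abs]; exact Real.sqrt_le_sqrt (hSb t)
  have habsS' : ∀ t, |deriv S t| ≤ R := by
    intro t; rw [← Real.sqrt_sq_eq_abs]; exact Real.sqrt_le_sqrt (hS'b t)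
  have hnz : ∀ t, S t ≠ 0 := by
    intro t₁ ht₁
    have hsq : (deriv S t₁) ^ 2 = 0 := by rw [hen t₁, ht₁]; ring
    have h0 : deriv S t₁ = 0 := by
      exact pow_eq_zero_iff (n := 2) (by norm_num) |>.mp hsq
    have hall := soliton_ode_unique lam R hlam (Real.sqrt_nonneg _) S (deriv S)
      (fun _ => 0) (fun _ => 0) hSd hS'd habsS habsS'
      (fun t => hasDerivAt_const t 0) (fun t => by simpa using hasDerivAt_const t (0:ℝ))
      (fun t => by show |(0:ℝ)| ≤ R; rw [abs_zero, hRdef]; positivity)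
      (fun t => by show |(0:ℝ)| ≤ R; rw [abs_zero, hRdef]; positivity)
      t₁ ht₁ h0
    obtain ⟨ξ, hξ⟩ := hne
    exact hξ (hall ξ)
  by_cases hpos : ∀ t, 0 < S t
  · obtain ⟨c, hc⟩ := soliton_positive lam hlam S (deriv S) hSd hS'd habsS habsS' hen hpos htop hbot
    refine ⟨c, 1, Or.inl rfl, fun ξ => by rw [one_mul]; exact hc ξ, ?_⟩
    intro heven
    exact even_center lam c 1 hlam (Or.inl rfl) S (fun ξ => by rw [one_mul]; exact hc ξ) heven
  · push_neg at hpos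
    obtain ⟨t₁, ht₁⟩ := hpos
    have ht₁' : S t₁ < 0 := lt_of_le_of_ne ht₁ (hnz t₁)
    have hneg : ∀ t, S t < 0 := by
      intro t
      by_contra h
      push_neg at h
      have ht' : 0 < S t := lt_of_le_of_ne h (Ne.symm (hnz t))
      have hmem : (0:ℝ) ∈ uIcc (S t₁) (S t) :=
        Set.mem_uIcc.mpr (Or.inl ⟨ht₁'.le, ht'.le⟩)
      obtain ⟨z, _, hz⟩ := intermediate_value_uIcc
        (fun x _ => (hSd x).continuousAt.continuousWithinAt) hmem
      exact hnz z hz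
    set u : ℝ → ℝ := fun t => -S t with hudef
    set u' : ℝ → ℝ := fun t => -deriv S t with hudef'
    have hu : ∀ t, HasDerivAt u (u' t) t := fun t => (hSd t).neg
    have hu' : ∀ t, HasDerivAt u' (u t - lam * u t ^ 3) t := by
      intro t
      have := (hS'd t).neg
      refine this.congr_deriv ?_
      simp only [hudef]
      ring
    have hub : ∀ t, |u t| ≤ R := fun t => by simpa [hudef, abs_neg] using habsS t
    have hub' : ∀ t, |u' t| ≤ R := fun t => by simpa [hudef', abs_neg] using habsS' t
    have hen' : ∀ t, u' t ^ 2 = u t ^ 2 * (1 - lam / 2 * u t ^ 2) := by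
      intro t
      simp only [hudef, hudef']
      linear_combination hen t
    have hupos : ∀ t, 0 < u t := fun t => by simp [hudef]; linarith [hneg t]
    have htop' : Tendsto u atTop (nhds 0) := by simpa using htop.neg
    have hbot' : Tendsto u atBot (nhds 0) := by simpa using hbot.neg
    obtain ⟨c, hc⟩ := soliton_positive lam hlam u u' hu hu' hub hub' hen' hupos htop' hbot'
    have hrepr : ∀ ξ, S ξ = -1 * (Real.sqrt (2 / lam) / Real.cosh (ξ - c)) := by
      intro ξ
      have := hc ξ
      simp only [hudef] at this
      linarith
    exact ⟨c, -1, Or.inr rfl, hrepr,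
      fun heven => even_center lam c (-1) hlam (Or.inr rfl) S hrepr heven⟩
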